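/- The third derivative of ξ(t) = (cos²t + 2t·sin t·cos t + t² − π²/4)/cos²t is negative on (−π/2, 0) and positive on (0, π/2), and its limit as t → π/2 from the left is 8π/15. -/

import Mathlib

set_option linter.unreachableTactic false
set_option linter.unusedTactic false

open Real Set Filter

noncomputable def xi (t : ℝ) : ℝ :=
  (Real.cos t ^ 2 + 2 * t * Real.sin t * Real.cos t + t ^ 2 - Real.pi ^ 2 / 4) / Real.cos t ^ 2

noncomputable def Gf (t : ℝ) : ℝ :=
  3*(sin t*cos t^2) + 2*t*(cos t*(3 - 2*cos t^2)) + (t^2 - π^2/4)*(sin t*(3 - cos t^2))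



lemma nonneg_of_deriv {f f' : ℝ → ℝ} (hd : ∀ x, HasDerivAt f (f' x) x)
    (h0 : f 0 = 0) (h' : ∀ x, 0 ≤ x → 0 ≤ f' x) : ∀ x, 0 ≤ x → 0 ≤ f x := by
  intro x hx
  have hdiff : Differentiable ℝ f := fun y => (hd y).differentiableAt
  have hmono : MonotoneOn f (Ici (0:ℝ)) := by
    refine monotoneOn_of_deriv_nonneg (convex_Ici 0) hdiff.continuous.continuousOn
      hdiff.differentiableOn ?_
    intro y hy
    rw [interior_Ici] at hy
    rw [(hd y).deriv]
    exact h' y hy.le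
  have h2 := hmono self_mem_Ici hx hx
  rw [h0] at h2
  exact h2

lemma tay_sin_lo3 : ∀ x : ℝ, 0 ≤ x → x - x^3/6 ≤ sin x := by
  intro x hx
  have h := nonneg_of_deriv (f := fun y => sin y - (y - y^3/6))
    (f' := fun y => cos y - (1 - y^2/2)) ?_ (by norm_num) ?_ x hx
  · linarith
  · intro y
    have h1 : HasDerivAt (fun y : ℝ => sin y - (y - y^3/6))
        (cos y - (1 - 3*y^2/6)) y :=
      (hasDerivAt_sin y).sub ((hasDerivAt_id y).sub ((hasDerivAt_pow 3 y).div_const 6))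
    convert h1 using 1; ring
  · intro y _
    have := Real.one_sub_sq_div_two_le_cos (x := y)
    linarith

lemma tay_cos_hi4 : ∀ x : ℝ, 0 ≤ x → cos x ≤ 1 - x^2/2 + x^4/24 := by
  intro x hx
  have h := nonneg_of_deriv (f := fun y => 1 - y^2/2 + y^4/24 - cos y)
    (f' := fun y => -y + y^3/6 + sin y) ?_ (by norm_num) ?_ x hx
  · linarith
  · intro y
    have h1 : HasDerivAt (fun y : ℝ => 1 - y^2/2 + y^4/24 - cos y)
        (0 - 2*y^1/2 + 4*y^3/24 - (-sin y)) y :=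
      (((hasDerivAt_const y (1:ℝ)).sub ((hasDerivAt_pow 2 y).div_const 2)).add
        ((hasDerivAt_pow 4 y).div_const 24)).sub (hasDerivAt_cos y)
    convert h1 using 1; ring
  · intro y hy
    have := tay_sin_lo3 y hy
    nlinarith

lemma tay_sin_hi5 : ∀ x : ℝ, 0 ≤ x → sin x ≤ x - x^3/6 + x^5/120 := by
  intro x hx
  have h := nonneg_of_deriv (f := fun y => y - y^3/6 + y^5/120 - sin y)
    (f' := fun y => 1 - y^2/2 + y^4/24 - cos y) ?_ (by norm_num) ?_ x hx
  · linarith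
  · intro y
    have h1 : HasDerivAt (fun y : ℝ => y - y^3/6 + y^5/120 - sin y)
        (1 - 3*y^2/6 + 5*y^4/120 - cos y) y :=
      (((hasDerivAt_id y).sub ((hasDerivAt_pow 3 y).div_const 6)).add
        ((hasDerivAt_pow 5 y).div_const 120)).sub (hasDerivAt_sin y)
    convert h1 using 1; ring
  · intro y hy
    have := tay_cos_hi4 y hy
    linarith

lemma tay_cos_lo6 : ∀ x : ℝ, 0 ≤ x → 1 - x^2/2 + x^4/24 - x^6/720 ≤ cos x := by
  intro x hx
  have h := nonneg_of_deriv (f := fun y => cos y - (1 - y^2/2 + y^4/24 - y^6/720))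
    (f' := fun y => -sin y - (-y + y^3/6 - y^5/120)) ?_ (by norm_num) ?_ x hx
  · linarith
  · intro y
    have h1 : HasDerivAt (fun y : ℝ => cos y - (1 - y^2/2 + y^4/24 - y^6/720))
        (-sin y - (0 - 2*y^1/2 + 4*y^3/24 - 6*y^5/720)) y :=
      (hasDerivAt_cos y).sub ((((hasDerivAt_const y (1:ℝ)).sub
        ((hasDerivAt_pow 2 y).div_const 2)).add ((hasDerivAt_pow 4 y).div_const 24)).sub
        ((hasDerivAt_pow 6 y).div_const 720))
    convert h1 using 1; ring
  · intro y hy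
    have := tay_sin_hi5 y hy
    linarith

lemma tay_sin_lo7 : ∀ x : ℝ, 0 ≤ x → x - x^3/6 + x^5/120 - x^7/5040 ≤ sin x := by
  intro x hx
  have h := nonneg_of_deriv (f := fun y => sin y - (y - y^3/6 + y^5/120 - y^7/5040))
    (f' := fun y => cos y - (1 - y^2/2 + y^4/24 - y^6/720)) ?_ (by norm_num) ?_ x hx
  · linarith
  · intro y
    have h1 : HasDerivAt (fun y : ℝ => sin y - (y - y^3/6 + y^5/120 - y^7/5040))
        (cos y - (1 - 3*y^2/6 + 5*y^4/120 - 7*y^6/5040)) y :=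
      (hasDerivAt_sin y).sub ((((hasDerivAt_id y).sub ((hasDerivAt_pow 3 y).div_const 6)).add
        ((hasDerivAt_pow 5 y).div_const 120)).sub ((hasDerivAt_pow 7 y).div_const 5040))
    convert h1 using 1; ring
  · intro y hy
    have := tay_cos_lo6 y hy
    linarith



section XB
variable {x : ℝ}

lemma basic_bounds (hx : 0 ≤ x) (hx1 : x ≤ 1) :
    0 ≤ x - x^3/6 + x^5/120 - x^7/5040 ∧ 0 ≤ 1 - x^2/2 + x^4/24 - x^6/720 ∧
    0 ≤ sin x ∧ 0 ≤ cos x := by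
  have hb : (0:ℝ) ≤ 1 - x := by linarith
  have e1 : 0 ≤ x*(1 - x) := mul_nonneg hx hb
  have e2 : 0 ≤ x^2*(1 - x) := mul_nonneg (pow_nonneg hx 2) hb
  have e3 : 0 ≤ x^3*(1 - x) := mul_nonneg (pow_nonneg hx 3) hb
  have e4 : 0 ≤ x^4*(1 - x) := mul_nonneg (pow_nonneg hx 4) hb
  have e5 : 0 ≤ x^5*(1 - x) := mul_nonneg (pow_nonneg hx 5) hb
  have e6 : 0 ≤ x^6*(1 - x) := mul_nonneg (pow_nonneg hx 6) hb
  have g5 : 0 ≤ x^5 := pow_nonneg hx 5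
  have g4 : 0 ≤ x^4 := pow_nonneg hx 4
  have h1 : 0 ≤ x - x^3/6 + x^5/120 - x^7/5040 := by linarith
  have h2 : 0 ≤ 1 - x^2/2 + x^4/24 - x^6/720 := by linarith
  exact ⟨h1, h2, le_trans h1 (tay_sin_lo7 x hx), le_trans h2 (tay_cos_lo6 x hx)⟩

lemma A_ge (hx : 0 ≤ x) (hx1 : x ≤ 39/50) :
    x^5/15 + x^7/30 - x^8/100 ≤
      3*sin x - 2*sin x^3 - 3*x*cos x + x*(cos x*sin x^2) := by
  obtain ⟨hp7, hq6, hS0, hC0⟩ := basic_bounds hx (by linarith)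
  have hslo := tay_sin_lo7 x hx
  have hshi := tay_sin_hi5 x hx
  have hclo := tay_cos_lo6 x hx
  have hchi := tay_cos_hi4 x hx
  have hA2 : sin x^3 ≤ (x - x^3/6 + x^5/120)^3 := pow_le_pow_left₀ hS0 hshi 3
  have hA3 : 3*x*cos x ≤ 3*x*(1 - x^2/2 + x^4/24) :=
    mul_le_mul_of_nonneg_left hchi (by linarith)
  have hA4 : x*((1 - x^2/2 + x^4/24 - x^6/720)*(x - x^3/6 + x^5/120 - x^7/5040)^2)
      ≤ x*(cos x*sin x^2) :=
    mul_le_mul_of_nonneg_left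
      (mul_le_mul hclo (pow_le_pow_left₀ hp7 hslo 2) (by positivity) hC0) hx
  have hb : (0:ℝ) ≤ 39/50 - x := by linarith
  have f7 : 0 ≤ x^7*(39/50 - x) := mul_nonneg (pow_nonneg hx 7) hb
  have f8 : 0 ≤ x^8*(39/50 - x) := mul_nonneg (pow_nonneg hx 8) hb
  have f11 : 0 ≤ x^11*(39/50 - x) := mul_nonneg (pow_nonneg hx 11) hb
  have f12 : 0 ≤ x^12*(39/50 - x) := mul_nonneg (pow_nonneg hx 12) hb
  have f15 : 0 ≤ x^15*(39/50 - x) := mul_nonneg (pow_nonneg hx 15) hb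
  have f16 : 0 ≤ x^16*(39/50 - x) := mul_nonneg (pow_nonneg hx 16) hb
  have f19 : 0 ≤ x^19*(39/50 - x) := mul_nonneg (pow_nonneg hx 19) hb
  have f20 : 0 ≤ x^20*(39/50 - x) := mul_nonneg (pow_nonneg hx 20) hb
  have g7 : 0 ≤ x^7 := pow_nonneg hx 7
  have g11 : 0 ≤ x^11 := pow_nonneg hx 11
  have g15 : 0 ≤ x^15 := pow_nonneg hx 15
  have g19 : 0 ≤ x^19 := pow_nonneg hx 19
  linarith [hslo, hA2, hA3, hA4, f7, f8, f11, f12, f15, f16, f19, f20, g7, g11, g15, g19]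

end XB

section XB2
variable {x : ℝ}

/-- B(x) ≥ -x^6/3 + x^8/20 on [0, 0.78] -/
lemma B_ge (hx : 0 ≤ x) (hx1 : x ≤ 39/50) :
    -x^6/3 + x^8/20 ≤
      3*(cos x*sin x^2) - 6*x*sin x + 4*x*sin x^3 + 3*x^2*cos x - x^2*(cos x*sin x^2) := by
  obtain ⟨hp7, hq6, hS0, hC0⟩ := basic_bounds hx (by linarith)
  have hslo := tay_sin_lo7 x hx
  have hshi := tay_sin_hi5 x hx
  have hclo := tay_cos_lo6 x hx
  have hchi := tay_cos_hi4 x hx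
  have hB1 : (1 - x^2/2 + x^4/24 - x^6/720)*(x - x^3/6 + x^5/120 - x^7/5040)^2
      ≤ cos x*sin x^2 :=
    mul_le_mul hclo (pow_le_pow_left₀ hp7 hslo 2) (by positivity) hC0
  have hB2 : 6*x*sin x ≤ 6*x*(x - x^3/6 + x^5/120) :=
    mul_le_mul_of_nonneg_left hshi (by linarith)
  have hB3 : 4*x*(x - x^3/6 + x^5/120 - x^7/5040)^3 ≤ 4*x*sin x^3 :=
    mul_le_mul_of_nonneg_left (pow_le_pow_left₀ hp7 hslo 3) (by linarith)
  have hB4 : 3*x^2*(1 - x^2/2 + x^4/24 - x^6/720) ≤ 3*x^2*cos x :=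
    mul_le_mul_of_nonneg_left hclo (by positivity)
  have hB5 : x^2*(cos x*sin x^2) ≤ x^2*((1 - x^2/2 + x^4/24)*(x - x^3/6 + x^5/120)^2) := by
    refine mul_le_mul_of_nonneg_left ?_ (sq_nonneg x)
    exact mul_le_mul hchi (pow_le_pow_left₀ hS0 hshi 2) (by positivity) (le_trans hC0 hchi)
  have hb : (0:ℝ) ≤ 39/50 - x := by linarith
  have f8 : 0 ≤ x^8*(39/50 - x) := mul_nonneg (pow_nonneg hx 8) hb
  have f9 : 0 ≤ x^9*(39/50 - x) := mul_nonneg (pow_nonneg hx 9) hb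
  have f12 : 0 ≤ x^12*(39/50 - x) := mul_nonneg (pow_nonneg hx 12) hb
  have f13 : 0 ≤ x^13*(39/50 - x) := mul_nonneg (pow_nonneg hx 13) hb
  have f16 : 0 ≤ x^16*(39/50 - x) := mul_nonneg (pow_nonneg hx 16) hb
  have f17 : 0 ≤ x^17*(39/50 - x) := mul_nonneg (pow_nonneg hx 17) hb
  have f20 : 0 ≤ x^20*(39/50 - x) := mul_nonneg (pow_nonneg hx 20) hb
  have f21 : 0 ≤ x^21*(39/50 - x) := mul_nonneg (pow_nonneg hx 21) hb
  have g8 : 0 ≤ x^8 := pow_nonneg hx 8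
  have g12 : 0 ≤ x^12 := pow_nonneg hx 12
  have g16 : 0 ≤ x^16 := pow_nonneg hx 16
  have g20 : 0 ≤ x^20 := pow_nonneg hx 20
  linarith [hB1, hB2, hB3, hB4, hB5, f8, f9, f12, f13, f16, f17, f20, f21, g8, g12, g16, g20]

/-- A(x) ≤ x^5/15 + x^7/10 on [0, 1/10] -/
lemma A_le (hx : 0 ≤ x) (hx1 : x ≤ 1/10) :
    3*sin x - 2*sin x^3 - 3*x*cos x + x*(cos x*sin x^2) ≤ x^5/15 + x^7/10 := by
  have hx1' : x ≤ 39/50 := by linarith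
  obtain ⟨hp7, hq6, hS0, hC0⟩ := basic_bounds hx (by linarith)
  have hslo := tay_sin_lo7 x hx
  have hshi := tay_sin_hi5 x hx
  have hclo := tay_cos_lo6 x hx
  have hchi := tay_cos_hi4 x hx
  have h1 : sin x ≤ x - x^3/6 + x^5/120 := hshi
  have h2 : 2*(x - x^3/6 + x^5/120 - x^7/5040)^3 ≤ 2*sin x^3 := by
    have := pow_le_pow_left₀ hp7 hslo 3; linarith
  have h3 : 3*x*(1 - x^2/2 + x^4/24 - x^6/720) ≤ 3*x*cos x :=
    mul_le_mul_of_nonneg_left hclo (by linarith)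
  have h4 : x*(cos x*sin x^2) ≤ x*((1 - x^2/2 + x^4/24)*(x - x^3/6 + x^5/120)^2) := by
    refine mul_le_mul_of_nonneg_left ?_ hx
    exact mul_le_mul hchi (pow_le_pow_left₀ hS0 hshi 2) (by positivity) (le_trans hC0 hchi)
  have hb : (0:ℝ) ≤ 1/10 - x := by linarith
  have f7 : 0 ≤ x^7*(1/10 - x) := mul_nonneg (pow_nonneg hx 7) hb
  have f8 : 0 ≤ x^8*(1/10 - x) := mul_nonneg (pow_nonneg hx 8) hb
  have f9 : 0 ≤ x^9*(1/10 - x) := mul_nonneg (pow_nonneg hx 9) hb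
  have f10 : 0 ≤ x^10*(1/10 - x) := mul_nonneg (pow_nonneg hx 10) hb
  have f11 : 0 ≤ x^11*(1/10 - x) := mul_nonneg (pow_nonneg hx 11) hb
  have f12 : 0 ≤ x^12*(1/10 - x) := mul_nonneg (pow_nonneg hx 12) hb
  have f13 : 0 ≤ x^13*(1/10 - x) := mul_nonneg (pow_nonneg hx 13) hb
  have f14 : 0 ≤ x^14*(1/10 - x) := mul_nonneg (pow_nonneg hx 14) hb
  have f15 : 0 ≤ x^15*(1/10 - x) := mul_nonneg (pow_nonneg hx 15) hb
  have f16 : 0 ≤ x^16*(1/10 - x) := mul_nonneg (pow_nonneg hx 16) hb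
  have f17 : 0 ≤ x^17*(1/10 - x) := mul_nonneg (pow_nonneg hx 17) hb
  have f18 : 0 ≤ x^18*(1/10 - x) := mul_nonneg (pow_nonneg hx 18) hb
  have f19 : 0 ≤ x^19*(1/10 - x) := mul_nonneg (pow_nonneg hx 19) hb
  have f20 : 0 ≤ x^20*(1/10 - x) := mul_nonneg (pow_nonneg hx 20) hb
  have g7 : 0 ≤ x^7 := pow_nonneg hx 7
  have g9 : 0 ≤ x^9 := pow_nonneg hx 9
  have g11 : 0 ≤ x^11 := pow_nonneg hx 11
  have g13 : 0 ≤ x^13 := pow_nonneg hx 13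
  have g15 : 0 ≤ x^15 := pow_nonneg hx 15
  have g17 : 0 ≤ x^17 := pow_nonneg hx 17
  have g19 : 0 ≤ x^19 := pow_nonneg hx 19
  linarith [h1, h2, h3, h4, f7, f8, f9, f10, f11, f12, f13, f14, f15, f16, f17, f18,
    f19, f20, g7, g9, g11, g13, g15, g17, g19]

/-- B(x) ≤ -x^6/3 + x^8 on [0, 1/10] -/
lemma B_le (hx : 0 ≤ x) (hx1 : x ≤ 1/10) :
    3*(cos x*sin x^2) - 6*x*sin x + 4*x*sin x^3 + 3*x^2*cos x - x^2*(cos x*sin x^2)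
      ≤ -x^6/3 + x^8 := by
  have hx1' : x ≤ 39/50 := by linarith
  obtain ⟨hp7, hq6, hS0, hC0⟩ := basic_bounds hx (by linarith)
  have hslo := tay_sin_lo7 x hx
  have hshi := tay_sin_hi5 x hx
  have hclo := tay_cos_lo6 x hx
  have hchi := tay_cos_hi4 x hx
  have h1 : 3*(cos x*sin x^2) ≤ 3*((1 - x^2/2 + x^4/24)*(x - x^3/6 + x^5/120)^2) := by
    have := mul_le_mul hchi (pow_le_pow_left₀ hS0 hshi 2) (by positivity) (le_trans hC0 hchi)
    linarith
  have h2 : 6*x*(x - x^3/6 + x^5/120 - x^7/5040) ≤ 6*x*sin x :=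
    mul_le_mul_of_nonneg_left hslo (by linarith)
  have h3 : 4*x*sin x^3 ≤ 4*x*(x - x^3/6 + x^5/120)^3 :=
    mul_le_mul_of_nonneg_left (pow_le_pow_left₀ hS0 hshi 3) (by linarith)
  have h4 : 3*x^2*cos x ≤ 3*x^2*(1 - x^2/2 + x^4/24) :=
    mul_le_mul_of_nonneg_left hchi (by positivity)
  have h5 : x^2*((1 - x^2/2 + x^4/24 - x^6/720)*(x - x^3/6 + x^5/120 - x^7/5040)^2)
      ≤ x^2*(cos x*sin x^2) := by
    refine mul_le_mul_of_nonneg_left ?_ (sq_nonneg x)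
    exact mul_le_mul hclo (pow_le_pow_left₀ hp7 hslo 2) (by positivity) hC0
  have hb : (0:ℝ) ≤ 1/10 - x := by linarith
  have f8 : 0 ≤ x^8*(1/10 - x) := mul_nonneg (pow_nonneg hx 8) hb
  have f9 : 0 ≤ x^9*(1/10 - x) := mul_nonneg (pow_nonneg hx 9) hb
  have f10 : 0 ≤ x^10*(1/10 - x) := mul_nonneg (pow_nonneg hx 10) hb
  have f11 : 0 ≤ x^11*(1/10 - x) := mul_nonneg (pow_nonneg hx 11) hb
  have f12 : 0 ≤ x^12*(1/10 - x) := mul_nonneg (pow_nonneg hx 12) hb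
  have f13 : 0 ≤ x^13*(1/10 - x) := mul_nonneg (pow_nonneg hx 13) hb
  have f14 : 0 ≤ x^14*(1/10 - x) := mul_nonneg (pow_nonneg hx 14) hb
  have f15 : 0 ≤ x^15*(1/10 - x) := mul_nonneg (pow_nonneg hx 15) hb
  have f16 : 0 ≤ x^16*(1/10 - x) := mul_nonneg (pow_nonneg hx 16) hb
  have f17 : 0 ≤ x^17*(1/10 - x) := mul_nonneg (pow_nonneg hx 17) hb
  have f18 : 0 ≤ x^18*(1/10 - x) := mul_nonneg (pow_nonneg hx 18) hb
  have f19 : 0 ≤ x^19*(1/10 - x) := mul_nonneg (pow_nonneg hx 19) hb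
  have f20 : 0 ≤ x^20*(1/10 - x) := mul_nonneg (pow_nonneg hx 20) hb
  have f21 : 0 ≤ x^21*(1/10 - x) := mul_nonneg (pow_nonneg hx 21) hb
  have g8 : 0 ≤ x^8 := pow_nonneg hx 8
  have g10 : 0 ≤ x^10 := pow_nonneg hx 10
  have g12 : 0 ≤ x^12 := pow_nonneg hx 12
  have g14 : 0 ≤ x^14 := pow_nonneg hx 14
  have g16 : 0 ≤ x^16 := pow_nonneg hx 16
  have g18 : 0 ≤ x^18 := pow_nonneg hx 18
  have g20 : 0 ≤ x^20 := pow_nonneg hx 20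
  linarith [h1, h2, h3, h4, h5, f8, f9, f10, f11, f12, f13, f14, f15, f16, f17, f18,
    f19, f20, f21, g8, g10, g12, g14, g16, g18, g20]

end XB2

section GP
variable {t x : ℝ}

set_option maxHeartbeats 1000000 in
/-- t-side positivity: G(t) > 0 for t ∈ (0, 4/5] -/
lemma G_pos_small (ht : 0 < t) (ht1 : t ≤ 4/5) : 0 < Gf t := by
  unfold Gf
  have hx : (0:ℝ) ≤ t := ht.le
  obtain ⟨hp7, hq6, hS0, hC0⟩ := basic_bounds hx (by linarith)
  have hslo := tay_sin_lo7 t hx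
  have hshi := tay_sin_hi5 t hx
  have hclo := tay_cos_lo6 t hx
  have hchi := tay_cos_hi4 t hx
  have hcs : cos t^2 = 1 - sin t^2 := by
    have := sin_sq_add_cos_sq t; linarith
  rw [hcs]
  -- rewrite G = (3*sin - 3*sin^3) + (6t cos - 4t cos^3) + (t^2-π²/4)(2 sin + sin^3)
  have key : ∀ S C : ℝ, 3*(S*(1-S^2)) + 2*t*(C*(3-2*(1-S^2))) + (t^2-π^2/4)*(S*(3-(1-S^2)))
      = (3*S - 3*S^3) + (6*t*C - 4*t*C^3) + 4*t*C*(C^2-(1-S^2)) + (t^2-π^2/4)*(2*S+S^3) := by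
    intro S C; ring
  rw [key (sin t) (cos t)]
  have hC2 : cos t^2 - (1-sin t^2) = 0 := by rw [hcs]; ring
  have e0 : 4*t*cos t*(cos t^2-(1-sin t^2)) = 0 := by rw [hC2]; ring
  -- bounds
  have h1 : 3*(t - t^3/6 + t^5/120 - t^7/5040) ≤ 3*sin t := by linarith
  have h2 : 3*sin t^3 ≤ 3*(t - t^3/6 + t^5/120)^3 := by
    have := pow_le_pow_left₀ hS0 hshi 3; linarith
  have h3 : 6*t*(1 - t^2/2 + t^4/24 - t^6/720) ≤ 6*t*cos t :=
    mul_le_mul_of_nonneg_left hclo (by linarith)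
  have h4 : 4*t*cos t^3 ≤ 4*t*(1 - t^2/2 + t^4/24)^3 :=
    mul_le_mul_of_nonneg_left (pow_le_pow_left₀ hC0 hchi 3) (by linarith)
  -- the negative term
  have hpi2 : π^2 ≤ 98697/10000 := by nlinarith [pi_lt_d6, pi_gt_three]
  have hpilo : (3:ℝ)^2 ≤ π^2 := by nlinarith [pi_gt_three]
  have hneg : t^2 - π^2/4 ≤ 0 := by nlinarith
  have hMup : sin t*(2+sin t^2) ≤ (t - t^3/6 + t^5/120)*(2+(t - t^3/6 + t^5/120)^2) := by
    have hs2 : sin t^2 ≤ (t - t^3/6 + t^5/120)^2 := pow_le_pow_left₀ hS0 hshi 2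
    have hs3 : sin t^3 ≤ (t - t^3/6 + t^5/120)^3 := pow_le_pow_left₀ hS0 hshi 3
    nlinarith [hs2, hs3, hshi]
  have hMnn : 0 ≤ (t - t^3/6 + t^5/120)*(2+(t - t^3/6 + t^5/120)^2) := by
    have hp5 : 0 ≤ t - t^3/6 + t^5/120 := le_trans hp7 (by nlinarith [pow_nonneg hx 7])
    positivity
  have step1 : (t^2-π^2/4)*((t - t^3/6 + t^5/120)*(2+(t - t^3/6 + t^5/120)^2))
      ≤ (t^2-π^2/4)*(sin t*(2+sin t^2)) := mul_le_mul_of_nonpos_left hMup hneg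
  have step2 : (t^2-98697/40000)*((t - t^3/6 + t^5/120)*(2+(t - t^3/6 + t^5/120)^2))
      ≤ (t^2-π^2/4)*((t - t^3/6 + t^5/120)*(2+(t - t^3/6 + t^5/120)^2)) := by
    have h98 : t^2-98697/40000 ≤ t^2-π^2/4 := by linarith
    exact mul_le_mul_of_nonneg_right h98 hMnn
  have hsin3 : (t^2-π^2/4)*(sin t*(3-(1-sin t^2))) = (t^2-π^2/4)*(sin t*(2+sin t^2)) := by ring
  -- final polynomial certificate
  have hb2 : (0:ℝ) ≤ 16/25 - t^2 := by nlinarith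
  have m1 : 0 ≤ t*(16/25 - t^2) := mul_nonneg hx hb2
  have m2 : 0 ≤ t*(16/25 - t^2)^2 := mul_nonneg hx (sq_nonneg _)
  have m5 : 0 ≤ t^5*(16/25 - t^2) := mul_nonneg (pow_nonneg hx 5) hb2
  have m9 : 0 ≤ t^9*(16/25 - t^2) := mul_nonneg (pow_nonneg hx 9) hb2
  have m13 : 0 ≤ t^13*(16/25 - t^2) := mul_nonneg (pow_nonneg hx 13) hb2
  have m17 : 0 ≤ t^17*(16/25 - t^2) := mul_nonneg (pow_nonneg hx 17) hb2
  have n5 : 0 ≤ t^5 := pow_nonneg hx 5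
  have n9 : 0 ≤ t^9 := pow_nonneg hx 9
  have n13 : 0 ≤ t^13 := pow_nonneg hx 13
  have n17 : 0 ≤ t^17 := pow_nonneg hx 17
  linarith [h1, h2, h3, h4, step1, step2, e0, m1, m2, m5, m9, m13, m17, n5, n9, n13, n17, ht]

end GP

section GG
variable {x : ℝ}

/-- the function g(x) (equal to G(π/2 - x)) -/
noncomputable def gg (x : ℝ) : ℝ :=
  3*(cos x*sin x^2) + (π-2*x)*(sin x*(3-2*sin x^2)) - x*(π-x)*(cos x*(3-sin x^2))

lemma gg_eq (x : ℝ) : gg x =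
    π*(3*sin x - 2*sin x^3 - 3*x*cos x + x*(cos x*sin x^2))
    + (3*(cos x*sin x^2) - 6*x*sin x + 4*x*sin x^3 + 3*x^2*cos x - x^2*(cos x*sin x^2)) := by
  unfold gg; ring

set_option maxHeartbeats 1000000 in
lemma gg_pos (hx : 0 < x) (hx1 : x ≤ 39/50) : 0 < gg x := by
  rw [gg_eq]
  have hA := A_ge hx.le hx1
  have hB := B_ge hx.le hx1
  have hb : (0:ℝ) ≤ 39/50 - x := by linarith
  have hq : 0 ≤ x^5/15 + x^7/30 - x^8/100 := by
    nlinarith [mul_nonneg (pow_nonneg hx.le 7) hb, pow_nonneg hx.le 5, pow_nonneg hx.le 7]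
  have h1 : π*(x^5/15 + x^7/30 - x^8/100)
      ≤ π*(3*sin x - 2*sin x^3 - 3*x*cos x + x*(cos x*sin x^2)) :=
    mul_le_mul_of_nonneg_left hA pi_pos.le
  have h2 : (31415/10000)*(x^5/15 + x^7/30 - x^8/100) ≤ π*(x^5/15 + x^7/30 - x^8/100) :=
    mul_le_mul_of_nonneg_right (by nlinarith [pi_gt_d6]) hq
  have m1 : 0 ≤ x^5*(39/50 - x) := mul_nonneg (pow_nonneg hx.le 5) hb
  have m2 : 0 ≤ x^5*(39/50 - x)^2 := mul_nonneg (pow_nonneg hx.le 5) (sq_nonneg _)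
  have m3 : 0 ≤ x^6*(39/50 - x)^2 := mul_nonneg (pow_nonneg hx.le 6) (sq_nonneg _)
  have m4 : 0 ≤ x^6*(39/50 - x) := mul_nonneg (pow_nonneg hx.le 6) hb
  have m5 : 0 ≤ x^7*(39/50 - x) := mul_nonneg (pow_nonneg hx.le 7) hb
  have p5 : 0 < x^5 := pow_pos hx 5
  linarith [hB, h1, h2, m1, m2, m3, m4, m5, p5]

set_option maxHeartbeats 1000000 in
lemma gg_close (hx : 0 < x) (hx1 : x ≤ 1/10) : |gg x - π/15*x^5| ≤ x^6/2 := by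
  rw [abs_le, gg_eq]
  have hA1 := A_ge hx.le (by linarith)
  have hA2 := A_le hx.le hx1
  have hB1 := B_ge hx.le (by linarith)
  have hB2 := B_le hx.le hx1
  have hb : (0:ℝ) ≤ 1/10 - x := by linarith
  have hq : 0 ≤ x^7/30 - x^8/100 := by
    nlinarith [mul_nonneg (pow_nonneg hx.le 7) hb, pow_nonneg hx.le 7]
  have h1 : π*(x^5/15 + x^7/30 - x^8/100)
      ≤ π*(3*sin x - 2*sin x^3 - 3*x*cos x + x*(cos x*sin x^2)) :=
    mul_le_mul_of_nonneg_left hA1 pi_pos.le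
  have h2 : π*(3*sin x - 2*sin x^3 - 3*x*cos x + x*(cos x*sin x^2))
      ≤ π*(x^5/15 + x^7/10) := mul_le_mul_of_nonneg_left hA2 pi_pos.le
  have h3 : 0 ≤ π*(x^7/30 - x^8/100) := mul_nonneg pi_pos.le hq
  have h4 : π*x^7 ≤ (31416/10000)*x^7 :=
    mul_le_mul_of_nonneg_right (by nlinarith [pi_lt_d6]) (pow_nonneg hx.le 7)
  have m6 : 0 ≤ x^6*(1/10 - x) := mul_nonneg (pow_nonneg hx.le 6) hb
  have m7 : 0 ≤ x^7*(1/10 - x) := mul_nonneg (pow_nonneg hx.le 7) hb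
  have p6 : 0 ≤ x^6 := pow_nonneg hx.le 6
  constructor
  · linarith [hB1, h1, h3]
  · linarith [hB2, h2, h4, m6, m7, p6]

end GG


noncomputable def D0 (t : ℝ) : ℝ := 1 + 2*t*tan t + (t^2-π^2/4)*(1+tan t^2)
noncomputable def D1 (t : ℝ) : ℝ :=
  2*tan t + 4*t*(1+tan t^2) + 2*(t^2-π^2/4)*(tan t*(1+tan t^2))
noncomputable def D2 (t : ℝ) : ℝ :=
  6*(1+tan t^2) + 12*t*(tan t*(1+tan t^2)) + 2*(t^2-π^2/4)*((1+tan t^2)*(1+3*tan t^2))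
noncomputable def D3 (t : ℝ) : ℝ :=
  24*(tan t*(1+tan t^2)) + 16*t*((1+tan t^2)*(1+3*tan t^2))
    + 8*(t^2-π^2/4)*(tan t*(1+tan t^2)*(2+3*tan t^2))

lemma cos_ne_open : IsOpen {t : ℝ | Real.cos t ≠ 0} :=
  isOpen_compl_singleton.preimage Real.continuous_cos

lemma xi_eq {t : ℝ} (h : Real.cos t ≠ 0) : xi t = D0 t := by
  unfold xi D0
  rw [Real.tan_eq_sin_div_cos]
  have h2 : Real.cos t ^ 2 ≠ 0 := pow_ne_zero 2 h
  field_simp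
  ring_nf
  linear_combination (π^2 - 4*t^2) * (Real.sin_sq_add_cos_sq t)

lemma hasD0 {t : ℝ} (h : Real.cos t ≠ 0) : HasDerivAt D0 (D1 t) t := by
  have ht := Real.hasDerivAt_tan h
  have hsec : 1/Real.cos t^2 = 1 + Real.tan t^2 := by
    rw [← Real.inv_one_add_tan_sq h, one_div, inv_inv]
  have h1 : HasDerivAt (fun y => 2*y*Real.tan y) (2*Real.tan t + 2*t*(1/Real.cos t^2)) t := by
    have := (((hasDerivAt_id t).const_mul (2:ℝ)).mul ht)
    convert this using 1
    all_goals first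
    | (funext y; rfl)
    | ((try funext y); (try simp only [id_eq, Pi.mul_apply, Pi.add_apply, Pi.pow_apply]); (try push_cast); ring; done)
    | ((try simp only [id_eq]); (try push_cast); ring)
    | (funext y; simp only [id_eq]; push_cast; ring)
    | rfl
  have h2 : HasDerivAt (fun y => (y^2-π^2/4)*(1+Real.tan y^2))
      (2*t^1*(1+Real.tan t^2) + (t^2-π^2/4)*(2*Real.tan t^1*(1/Real.cos t^2))) t := by
    have := ((hasDerivAt_pow 2 t).sub_const (π^2/4)).mul ((hasDerivAt_const t 1).add (ht.pow 2))
    convert this using 1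
    all_goals first
    | (funext y; rfl)
    | ((try funext y); (try simp only [id_eq, Pi.mul_apply, Pi.add_apply, Pi.pow_apply]); (try push_cast); ring; done)
    | ((try simp only [id_eq]); (try push_cast); ring)
    | (funext y; simp only [id_eq]; push_cast; ring)
    | rfl
  have h3 := ((hasDerivAt_const t (1:ℝ)).add h1).add h2
  have : HasDerivAt D0 (0 + (2*Real.tan t + 2*t*(1/Real.cos t^2)) +
      (2*t^1*(1+Real.tan t^2) + (t^2-π^2/4)*(2*Real.tan t^1*(1/Real.cos t^2)))) t := by
    exact h3
  convert this using 1
  unfold D1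
  rw [hsec]; ring

lemma hasD1 {t : ℝ} (h : Real.cos t ≠ 0) : HasDerivAt D1 (D2 t) t := by
  have ht := Real.hasDerivAt_tan h
  have hsec : 1/Real.cos t^2 = 1 + Real.tan t^2 := by rw [← Real.inv_one_add_tan_sq h, one_div, inv_inv]
  have h1 : HasDerivAt (fun y => 2*Real.tan y) (2*(1/Real.cos t^2)) t := ht.const_mul 2
  have h2 : HasDerivAt (fun y => 4*y*(1+Real.tan y^2))
      (4*(1+Real.tan t^2) + 4*t*(2*Real.tan t^1*(1/Real.cos t^2))) t := by
    have := (((hasDerivAt_id t).const_mul (4:ℝ)).mul ((hasDerivAt_const t 1).add (ht.pow 2)))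
    convert this using 1
    all_goals first
    | (funext y; rfl)
    | ((try funext y); (try simp only [id_eq, Pi.mul_apply, Pi.add_apply, Pi.pow_apply]); (try push_cast); ring; done)
    | ((try simp only [id_eq]); (try push_cast); ring)
    | (funext y; simp only [id_eq]; push_cast; ring)
    | rfl
  have h3 : HasDerivAt (fun y => 2*(y^2-π^2/4)*(Real.tan y*(1+Real.tan y^2)))
      (2*(2*t^1)*(Real.tan t*(1+Real.tan t^2)) +
        2*(t^2-π^2/4)*((1/Real.cos t^2)*(1+Real.tan t^2) + Real.tan t*(2*Real.tan t^1*(1/Real.cos t^2)))) t := by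
    have hin : HasDerivAt (fun y => Real.tan y*(1+Real.tan y^2))
        ((1/Real.cos t^2)*(1+Real.tan t^2) + Real.tan t*(2*Real.tan t^1*(1/Real.cos t^2))) t := by
      have := ht.mul ((hasDerivAt_const t 1).add (ht.pow 2))
      convert this using 1
      all_goals first
      | (funext y; rfl)
      | ((try funext y); (try simp only [id_eq, Pi.mul_apply, Pi.add_apply, Pi.pow_apply]); (try push_cast); ring; done)
      | ((try simp only [id_eq]); (try push_cast); ring)
      | (funext y; simp only [id_eq]; push_cast; ring)
      | rfl
    have := (((hasDerivAt_pow 2 t).sub_const (π^2/4)).const_mul (2:ℝ)).mul hin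
    convert this using 1
    all_goals first
    | (funext y; rfl)
    | ((try funext y); (try simp only [id_eq, Pi.mul_apply, Pi.add_apply, Pi.pow_apply]); (try push_cast); ring; done)
    | ((try simp only [id_eq]); (try push_cast); ring)
    | (funext y; simp only [id_eq]; push_cast; ring)
    | rfl
  have h4 := (h1.add h2).add h3
  have : HasDerivAt D1 (2*(1/Real.cos t^2) +
      (4*(1+Real.tan t^2) + 4*t*(2*Real.tan t^1*(1/Real.cos t^2))) +
      (2*(2*t^1)*(Real.tan t*(1+Real.tan t^2)) +
        2*(t^2-π^2/4)*((1/Real.cos t^2)*(1+Real.tan t^2) + Real.tan t*(2*Real.tan t^1*(1/Real.cos t^2))))) t := by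
    have hfun : D1 = fun y => 2*Real.tan y + 4*y*(1+Real.tan y^2) + 2*(y^2-π^2/4)*(Real.tan y*(1+Real.tan y^2)) := by
      ext y; unfold D1; ring
    rw [hfun]; exact h4
  convert this using 1
  unfold D2
  rw [hsec]; ring

lemma hasD2 {t : ℝ} (h : Real.cos t ≠ 0) : HasDerivAt D2 (D3 t) t := by
  have ht := Real.hasDerivAt_tan h
  have hsec : 1/Real.cos t^2 = 1 + Real.tan t^2 := by rw [← Real.inv_one_add_tan_sq h, one_div, inv_inv]
  have h1 : HasDerivAt (fun y => 6*(1+Real.tan y^2)) (6*(2*Real.tan t^1*(1/Real.cos t^2))) t := by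
    have := ((hasDerivAt_const t 1).add (ht.pow 2)).const_mul (6:ℝ)
    convert this using 1
    all_goals first
    | (funext y; rfl)
    | ((try funext y); (try simp only [id_eq, Pi.mul_apply, Pi.add_apply, Pi.pow_apply]); (try push_cast); ring; done)
    | ((try simp only [id_eq]); (try push_cast); ring)
    | (funext y; simp only [id_eq]; push_cast; ring)
    | rfl
  have hin : HasDerivAt (fun y => Real.tan y*(1+Real.tan y^2))
      ((1/Real.cos t^2)*(1+Real.tan t^2) + Real.tan t*(2*Real.tan t^1*(1/Real.cos t^2))) t := by
    have := ht.mul ((hasDerivAt_const t 1).add (ht.pow 2))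
    convert this using 1
    all_goals first
    | (funext y; rfl)
    | ((try funext y); (try simp only [id_eq, Pi.mul_apply, Pi.add_apply, Pi.pow_apply]); (try push_cast); ring; done)
    | ((try simp only [id_eq]); (try push_cast); ring)
    | (funext y; simp only [id_eq]; push_cast; ring)
    | rfl
  have h2 : HasDerivAt (fun y => 12*y*(Real.tan y*(1+Real.tan y^2)))
      (12*(Real.tan t*(1+Real.tan t^2)) + 12*t*((1/Real.cos t^2)*(1+Real.tan t^2) + Real.tan t*(2*Real.tan t^1*(1/Real.cos t^2)))) t := by
    have := (((hasDerivAt_id t).const_mul (12:ℝ)).mul hin)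
    convert this using 1
    all_goals first
    | (funext y; rfl)
    | ((try funext y); (try simp only [id_eq, Pi.mul_apply, Pi.add_apply, Pi.pow_apply]); (try push_cast); ring; done)
    | ((try simp only [id_eq]); (try push_cast); ring)
    | (funext y; simp only [id_eq]; push_cast; ring)
    | rfl
  have hin2 : HasDerivAt (fun y => (1+Real.tan y^2)*(1+3*Real.tan y^2))
      ((2*Real.tan t^1*(1/Real.cos t^2))*(1+3*Real.tan t^2)
        + (1+Real.tan t^2)*(3*(2*Real.tan t^1*(1/Real.cos t^2)))) t := by
    have := ((hasDerivAt_const t 1).add (ht.pow 2)).mul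
      ((hasDerivAt_const t 1).add ((ht.pow 2).const_mul (3:ℝ)))
    convert this using 1
    all_goals first
    | (funext y; rfl)
    | ((try funext y); (try simp only [id_eq, Pi.mul_apply, Pi.add_apply, Pi.pow_apply]); (try push_cast); ring; done)
    | ((try simp only [id_eq]); (try push_cast); ring)
    | (funext y; simp only [id_eq]; push_cast; ring)
    | rfl
  have h3 : HasDerivAt (fun y => 2*(y^2-π^2/4)*((1+Real.tan y^2)*(1+3*Real.tan y^2)))
      (2*(2*t^1)*((1+Real.tan t^2)*(1+3*Real.tan t^2)) +
        2*(t^2-π^2/4)*((2*Real.tan t^1*(1/Real.cos t^2))*(1+3*Real.tan t^2)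
        + (1+Real.tan t^2)*(3*(2*Real.tan t^1*(1/Real.cos t^2))))) t := by
    have := (((hasDerivAt_pow 2 t).sub_const (π^2/4)).const_mul (2:ℝ)).mul hin2
    convert this using 1
    all_goals first
    | (funext y; rfl)
    | ((try funext y); (try simp only [id_eq, Pi.mul_apply, Pi.add_apply, Pi.pow_apply]); (try push_cast); ring; done)
    | ((try simp only [id_eq]); (try push_cast); ring)
    | (funext y; simp only [id_eq]; push_cast; ring)
    | rfl
  have h4 := (h1.add h2).add h3
  have hfun : D2 = fun y => 6*(1+Real.tan y^2) + 12*y*(Real.tan y*(1+Real.tan y^2))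
      + 2*(y^2-π^2/4)*((1+Real.tan y^2)*(1+3*Real.tan y^2)) := by
    ext y; unfold D2; ring
  rw [hfun]
  refine h4.congr_deriv ?_
  unfold D3
  rw [hsec]; ring

lemma deriv3_xi {t : ℝ} (h : Real.cos t ≠ 0) : deriv (deriv (deriv xi)) t = D3 t := by
  have hmem : {t : ℝ | Real.cos t ≠ 0} ∈ nhds t := cos_ne_open.mem_nhds h
  have hd1 : ∀ y : ℝ, Real.cos y ≠ 0 → deriv xi y = D1 y := by
    intro y hy
    have hev : xi =ᶠ[nhds y] D0 := by
      filter_upwards [cos_ne_open.mem_nhds hy] with z hz using xi_eq hz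
    rw [hev.deriv_eq]
    exact (hasD0 hy).deriv
  have hd2 : ∀ y : ℝ, Real.cos y ≠ 0 → deriv (deriv xi) y = D2 y := by
    intro y hy
    have hev : deriv xi =ᶠ[nhds y] D1 := by
      filter_upwards [cos_ne_open.mem_nhds hy] with z hz using hd1 z hz
    rw [hev.deriv_eq]
    exact (hasD1 hy).deriv
  have hev : deriv (deriv xi) =ᶠ[nhds t] D2 := by
    filter_upwards [hmem] with z hz using hd2 z hz
  rw [hev.deriv_eq]
  exact (hasD2 h).deriv


lemma D3_eq_G {t : ℝ} (h : Real.cos t ≠ 0) : D3 t = 8 * Gf t / cos t^5 := by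
  unfold D3 Gf
  rw [Real.tan_eq_sin_div_cos]
  field_simp
  linear_combination (4*Real.cos t*(24*Real.sin t*Real.cos t + 16*t*(Real.cos t^2 + 3*Real.sin t^2))
    + 8*Real.sin t*(4*t^2-π^2)*(2*Real.cos t^2 + 3*Real.sin t^2) + 192*t*Real.cos t
    + 24*Real.sin t*(4*t^2-π^2)) * (Real.sin_sq_add_cos_sq t)

lemma Gf_eq_gg (t : ℝ) : Gf t = gg (π/2 - t) := by
  unfold Gf gg
  rw [Real.sin_pi_div_two_sub, Real.cos_pi_div_two_sub]
  ring

lemma Gf_odd (t : ℝ) : Gf (-t) = -Gf t := by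
  unfold Gf
  rw [Real.sin_neg, Real.cos_neg]
  ring

lemma Gf_pos {t : ℝ} (ht : 0 < t) (ht2 : t < π/2) : 0 < Gf t := by
  rcases le_or_gt t (4/5) with h | h
  · exact G_pos_small ht h
  · rw [Gf_eq_gg]
    refine gg_pos (by linarith) ?_
    have := Real.pi_lt_d6
    linarith

theorem xi_third_deriv :
    (∀ t ∈ Ioo (-(Real.pi / 2)) (0:ℝ), deriv (deriv (deriv xi)) t < 0) ∧
    (∀ t ∈ Ioo (0:ℝ) (Real.pi / 2), 0 < deriv (deriv (deriv xi)) t) ∧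
    Filter.Tendsto (deriv (deriv (deriv xi)))
      (nhdsWithin (Real.pi / 2) (Set.Iio (Real.pi / 2))) (nhds (8 * Real.pi / 15)) := by
  refine ⟨?_, ?_, ?_⟩
  · -- negative part
    rintro t ⟨ht1, ht2⟩
    have hcos : 0 < Real.cos t :=
      Real.cos_pos_of_mem_Ioo ⟨ht1, by linarith [Real.pi_pos]⟩
    rw [deriv3_xi (ne_of_gt hcos), D3_eq_G (ne_of_gt hcos)]
    have hGpos : 0 < Gf (-t) := Gf_pos (by linarith) (by linarith)
    have hGneg : Gf t < 0 := by
      have := Gf_odd t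
      nlinarith [hGpos, this]
    exact div_neg_of_neg_of_pos (by linarith) (pow_pos hcos 5)
  · rintro t ⟨ht1, ht2⟩
    have hcos : 0 < Real.cos t :=
      Real.cos_pos_of_mem_Ioo ⟨by linarith [Real.pi_pos], ht2⟩
    rw [deriv3_xi (ne_of_gt hcos), D3_eq_G (ne_of_gt hcos)]
    have hG : 0 < Gf t := Gf_pos ht1 ht2
    exact div_pos (by linarith) (pow_pos hcos 5)
  · -- the limit
    have hsin1 : Tendsto (fun y : ℝ => Real.sin y / y) (nhdsWithin 0 (Ioi 0)) (nhds 1) := by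
      have h := Real.hasDerivAt_sin 0
      rw [hasDerivAt_iff_tendsto_slope] at h
      rw [Real.cos_zero] at h
      have h2 := h.mono_left (nhdsWithin_mono 0 (fun y (hy : y ∈ Ioi 0) => ne_of_gt hy))
      refine h2.congr' ?_
      filter_upwards [self_mem_nhdsWithin] with y hy
      simp [slope_def_field]
    have hT2 : Tendsto (fun y : ℝ => y / Real.sin y) (nhdsWithin 0 (Ioi 0)) (nhds 1) := by
      have := (hsin1.inv₀ one_ne_zero)
      rw [inv_one] at this
      refine this.congr' ?_
      filter_upwards [self_mem_nhdsWithin] with y _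
      rw [← one_div, one_div_div]
    have hT1 : Tendsto (fun x : ℝ => gg x / x^5) (nhdsWithin 0 (Ioi 0)) (nhds (π/15)) := by
      have hlow : Tendsto (fun x : ℝ => π/15 - x/2) (nhdsWithin 0 (Ioi 0)) (nhds (π/15)) := by
        have hc : Continuous (fun x : ℝ => π/15 - x/2) := by continuity
        have := hc.tendsto 0
        norm_num at this
        exact this.mono_left nhdsWithin_le_nhds
      have hhigh : Tendsto (fun x : ℝ => π/15 + x/2) (nhdsWithin 0 (Ioi 0)) (nhds (π/15)) := by
        have hc : Continuous (fun x : ℝ => π/15 + x/2) := by continuity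
        have := hc.tendsto 0
        norm_num at this
        exact this.mono_left nhdsWithin_le_nhds
      refine tendsto_of_tendsto_of_tendsto_of_le_of_le' hlow hhigh ?_ ?_
      · filter_upwards [Ioc_mem_nhdsGT_of_mem (by norm_num : (0:ℝ) ∈ Ico (0:ℝ) (1/10))]
          with x hx
        have h5 : (0:ℝ) < x^5 := pow_pos hx.1 5
        have := gg_close hx.1 hx.2
        rw [abs_le] at this
        rw [le_div_iff₀ h5]
        nlinarith [this.1, h5, pow_pos hx.1 6]
      · filter_upwards [Ioc_mem_nhdsGT_of_mem (by norm_num : (0:ℝ) ∈ Ico (0:ℝ) (1/10))]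
          with x hx
        have h5 : (0:ℝ) < x^5 := pow_pos hx.1 5
        have := gg_close hx.1 hx.2
        rw [abs_le] at this
        rw [div_le_iff₀ h5]
        nlinarith [this.2, h5, pow_pos hx.1 6]
    have hL : Tendsto (fun x : ℝ => 8 * gg x / Real.sin x^5) (nhdsWithin 0 (Ioi 0))
        (nhds (8*π/15)) := by
      have hm := (hT1.mul (hT2.pow 5)).const_mul (8:ℝ)
      have hval : (8:ℝ) * (π/15 * 1^5) = 8*π/15 := by ring
      rw [hval] at hm
      refine hm.congr' ?_
      filter_upwards [Ioo_mem_nhdsGT_of_mem (by norm_num : (0:ℝ) ∈ Ico (0:ℝ) 1)] with x hx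
      have hs : 0 < Real.sin x := Real.sin_pos_of_pos_of_lt_pi hx.1
        (lt_trans hx.2 (by linarith [Real.pi_gt_three]))
      have hx0 : x ≠ 0 := ne_of_gt hx.1
      field_simp
      try ring
    have hcomp : Tendsto (fun t : ℝ => π/2 - t) (nhdsWithin (π/2) (Iio (π/2)))
        (nhdsWithin 0 (Ioi 0)) := by
      refine tendsto_nhdsWithin_of_tendsto_nhds_of_eventually_within _ ?_ ?_
      · have hc : Continuous (fun t : ℝ => π/2 - t) := by continuity
        have := hc.tendsto (π/2)
        norm_num at this
        exact this.mono_left nhdsWithin_le_nhds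
      · filter_upwards [self_mem_nhdsWithin] with t ht
        exact sub_pos.2 (mem_Iio.mp ht)
    have := hL.comp hcomp
    refine this.congr' ?_
    filter_upwards [Ioo_mem_nhdsLT_of_mem
      (by constructor <;> [linarith [Real.pi_pos]; rfl] : π/2 ∈ Ioc (0:ℝ) (π/2))] with t ht
    have hcos : 0 < Real.cos t :=
      Real.cos_pos_of_mem_Ioo ⟨by linarith [Real.pi_pos, ht.1], ht.2⟩
    rw [Function.comp_apply, ← Gf_eq_gg t, Real.sin_pi_div_two_sub t,
      deriv3_xi (ne_of_gt hcos), D3_eq_G (ne_of_gt hcos)]
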